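/- The generating function of the (1,0)-entries of the bi-periodic Jacobsthal matrix sequence, which is the bi-periodic Jacobsthal sequence itself, satisfies (1 − (ab+4)x² + 4x⁴)·∑_{m≥0} j_m x^m = x + a·x² − 2·x³ as formal power series over ℝ. -/

import Mathlib

noncomputable def jj (a b : ℝ) : ℕ → ℝ
  | 0 => 0
  | 1 => 1
  | n + 2 => (if Even (n + 2) then a else b) * jj a b (n + 1) + 2 * jj a b n

lemma jj_rec (a b : ℝ) (n : ℕ) :
    jj a b (n + 4) = (a * b + 4) * jj a b (n + 2) - 4 * jj a b n := by
  have h4 : jj a b (n + 4) = (if Even (n + 4) then a else b) * jj a b (n + 3)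
      + 2 * jj a b (n + 2) := rfl
  have h3 : jj a b (n + 3) = (if Even (n + 3) then a else b) * jj a b (n + 2)
      + 2 * jj a b (n + 1) := rfl
  have h2 : jj a b (n + 2) = (if Even (n + 2) then a else b) * jj a b (n + 1)
      + 2 * jj a b n := rfl
  rcases Nat.even_or_odd n with h | h
  · have hm := Nat.even_iff.mp h
    have c4 : Even (n + 4) := by simp [Nat.even_iff, Nat.add_mod, hm]
    have c3 : ¬ Even (n + 3) := by simp [Nat.even_iff, Nat.add_mod, hm]
    have c2 : Even (n + 2) := by simp [Nat.even_iff, Nat.add_mod, hm]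
    rw [h4, h3, h2, if_pos c4, if_neg c3, if_pos c2]; ring
  · have hm := Nat.odd_iff.mp h
    have c4 : ¬ Even (n + 4) := by simp [Nat.even_iff, Nat.add_mod, hm]
    have c3 : Even (n + 3) := by simp [Nat.even_iff, Nat.add_mod, hm]
    have c2 : ¬ Even (n + 2) := by simp [Nat.even_iff, Nat.add_mod, hm]
    rw [h4, h3, h2, if_neg c4, if_pos c3, if_neg c2]; ring

open PowerSeries in
theorem stmt6 (a b : ℝ) (ha : a ≠ 0) (hb : b ≠ 0) :
    (1 - C (R := ℝ) (a * b + 4) * X ^ 2 + C (R := ℝ) 4 * X ^ 4) * PowerSeries.mk (jj a b)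
      = X + C (R := ℝ) a * X ^ 2 - C (R := ℝ) 2 * X ^ 3 := by
  have j0 : jj a b 0 = 0 := rfl
  have j1 : jj a b 1 = 1 := rfl
  have j2 : jj a b 2 = a := by
    rw [show jj a b 2 = (if Even 2 then a else b) * jj a b 1 + 2 * jj a b 0 from rfl,
      if_pos (by decide), j1, j0]; ring
  have j3 : jj a b 3 = a * b + 2 := by
    rw [show jj a b 3 = (if Even 3 then a else b) * jj a b 2 + 2 * jj a b 1 from rfl,
      if_neg (by decide), j2, j1]; ring
  ext n
  rw [add_mul, sub_mul, one_mul, mul_assoc, mul_assoc]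
  generalize hr : a * b + 4 = r
  simp only [map_add, map_sub, coeff_C_mul]
  match n with
  | 0 => simp [coeff_X_pow_mul', coeff_mk, j0]
  | 1 => simp [coeff_X_pow_mul', coeff_mk, j1, coeff_X_pow]
  | 2 => simp [coeff_X_pow_mul', coeff_mk, j0, j2, coeff_X, coeff_X_pow]
  | 3 =>
    simp [coeff_X_pow_mul', coeff_mk, j1, j3, coeff_X, coeff_X_pow, ← hr]
    ring
  | (n + 4) =>
    rw [show n + 4 = (n + 2) + 2 from by ring, coeff_X_pow_mul,
      show (n + 2) + 2 = n + 4 from by ring, coeff_X_pow_mul]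
    simp only [coeff_mk]
    rw [jj_rec, ← hr]
    simp [coeff_X, coeff_one, coeff_X_pow]
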